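/- Suppose (q_a)_{a∈I} is a quasipolynomial solution of the Q-system such that each q_a has degree e_a ≥ 1 with constant leading coefficient c_a > 0. Then for every a ∈ I, in any representation of q_a by constituent polynomials p_{a,0}, …, p_{a,ℓ−1} (with q_a(m) = p_{a, m mod ℓ}(m) for all m ∈ ℤ and every p_{a,j} of degree e_a), all the constituents p_{a,j} have the same coefficient of x^{e_a − 1} and the same coefficient of x^{e_a − 2}; that is, the next two leading coefficients of q_a are also independent of m. -/

import Mathlib

open Polynomial

theorem myFdiv_neg_neg : ∀ (a b : ℤ), Int.fdiv (-a) (-b) = Int.fdiv a b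
  | Int.ofNat 0, b => by simp
  | Int.ofNat (m+1), Int.ofNat 0 => by simp
  | Int.ofNat (m+1), Int.ofNat (n+1) => rfl
  | Int.ofNat (m+1), Int.negSucc n => rfl
  | Int.negSucc m, Int.ofNat 0 => by simp
  | Int.negSucc m, Int.ofNat (n+1) => rfl
  | Int.negSucc m, Int.negSucc n => rfl

theorem myFdiv_add_mul (a t : ℤ) {b : ℤ} (hb : b ≠ 0) :
    Int.fdiv (a + b * t) b = Int.fdiv a b + t := by
  rcases lt_or_gt_of_ne hb with h | h
  · have hb' : (0:ℤ) ≤ -b := by omega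
    have hb'' : -b ≠ 0 := by omega
    rw [← myFdiv_neg_neg (a + b * t) b, ← myFdiv_neg_neg a b,
      Int.fdiv_eq_ediv_of_nonneg _ hb', Int.fdiv_eq_ediv_of_nonneg _ hb']
    have : -(a + b * t) = -a + t * -b := by ring
    rw [this, Int.add_mul_ediv_right _ _ hb'']
  · rw [Int.fdiv_eq_ediv_of_nonneg _ (by omega), Int.fdiv_eq_ediv_of_nonneg _ (by omega)]
    have : a + b * t = a + t * b := by ring
    rw [this, Int.add_mul_ediv_right _ _ hb]

theorem myEqOnProg (P Q : ℝ[X]) (r : ℤ) (L : ℕ) (hL : 1 ≤ L)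
    (h : ∀ n : ℕ, P.eval (((r + (L:ℤ) * n : ℤ) : ℝ)) = Q.eval (((r + (L:ℤ) * n : ℤ) : ℝ))) :
    P = Q := by
  apply Polynomial.eq_of_infinite_eval_eq
  apply Set.infinite_of_injective_forall_mem
    (f := fun n : ℕ => ((r + (L:ℤ) * n : ℤ) : ℝ))
  · intro m n hmn
    simp only at hmn
    have h2 : (r + (L:ℤ) * m : ℤ) = (r + (L:ℤ) * n : ℤ) := by exact_mod_cast hmn
    have h3 : (L:ℤ) * m = (L:ℤ) * n := by omega
    have h4 : (L:ℤ) ≠ 0 := by exact_mod_cast Nat.one_le_iff_ne_zero.mp hL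
    have := mul_left_cancel₀ h4 h3
    exact_mod_cast this
  · intro n
    exact h n

theorem myTaylor_coeff_top (t : ℝ) (P : ℝ[X]) {e : ℕ} (hP : P.natDegree ≤ e) :
    (Polynomial.taylor t P).coeff e = P.coeff e := by
  rw [taylor_coeff]
  have h1 : (Polynomial.hasseDeriv e P).natDegree < 1 := by
    have := P.natDegree_hasseDeriv_le e
    omega
  rw [Polynomial.eval_eq_sum_range' h1]
  simp [Polynomial.hasseDeriv_coeff]

theorem myTaylor_coeff_one (t : ℝ) (P : ℝ[X]) {e : ℕ} (hP : P.natDegree ≤ e) (he : 1 ≤ e) :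
    (Polynomial.taylor t P).coeff (e - 1) = P.coeff (e - 1) + e * t * P.coeff e := by
  rw [taylor_coeff]
  have h1 : (Polynomial.hasseDeriv (e-1) P).natDegree < 2 := by
    have := P.natDegree_hasseDeriv_le (e-1)
    omega
  rw [Polynomial.eval_eq_sum_range' h1]
  rw [Finset.sum_range_succ, Finset.sum_range_one]
  rw [Polynomial.hasseDeriv_coeff, Polynomial.hasseDeriv_coeff]
  have h2 : 0 + (e-1) = e - 1 := by omega
  have h3 : 1 + (e-1) = e := by omega
  rw [h2, h3]
  have h4 : (e-1).choose (e-1) = 1 := Nat.choose_self _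
  have h5 : e.choose (e-1) = e := by
    rw [Nat.choose_symm_of_eq_add (show e = (e-1) + 1 by omega), Nat.choose_one_right]
  rw [h4, h5]
  push_cast
  ring

theorem myTaylor_coeff_two (t : ℝ) (P : ℝ[X]) {e : ℕ} (hP : P.natDegree ≤ e) (he : 2 ≤ e) :
    (Polynomial.taylor t P).coeff (e - 2) =
      P.coeff (e - 2) + (e-1 : ℕ) * t * P.coeff (e - 1)
        + (e.choose 2 : ℝ) * t^2 * P.coeff e := by
  rw [taylor_coeff]
  have h1 : (Polynomial.hasseDeriv (e-2) P).natDegree < 3 := by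
    have := P.natDegree_hasseDeriv_le (e-2)
    omega
  rw [Polynomial.eval_eq_sum_range' h1]
  rw [Finset.sum_range_succ, Finset.sum_range_succ, Finset.sum_range_one]
  rw [Polynomial.hasseDeriv_coeff, Polynomial.hasseDeriv_coeff, Polynomial.hasseDeriv_coeff]
  have h2 : 0 + (e-2) = e - 2 := by omega
  have h3 : 1 + (e-2) = e - 1 := by omega
  have h3' : 2 + (e-2) = e := by omega
  rw [h2, h3, h3']
  have h4 : (e-2).choose (e-2) = 1 := Nat.choose_self _
  have h5 : (e-1).choose (e-2) = e - 1 := by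
    rw [Nat.choose_symm_of_eq_add (show e-1 = (e-2) + 1 by omega), Nat.choose_one_right]
  have h6 : e.choose (e-2) = e.choose 2 := by
    rw [Nat.choose_symm_of_eq_add (show e = (e-2) + 2 by omega)]
  rw [h4, h5, h6]
  push_cast
  ring

theorem myCoeff_mul_one (P Q : ℝ[X]) {e : ℕ} (he : 1 ≤ e)
    (hP : P.natDegree ≤ e) (hQ : Q.natDegree ≤ e) :
    (P * Q).coeff (2*e - 1) = P.coeff e * Q.coeff (e-1) + P.coeff (e-1) * Q.coeff e := by
  rw [Polynomial.coeff_mul, Finset.Nat.sum_antidiagonal_eq_sum_range_succ_mk]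
  rw [← Finset.sum_subset (s₁ := ({e-1, e} : Finset ℕ))]
  · rw [Finset.sum_insert (by simp; omega), Finset.sum_singleton]
    have h1 : 2*e - 1 - (e-1) = e := by omega
    have h2 : 2*e - 1 - e = e - 1 := by omega
    rw [h1, h2]; ring
  · intro x hx
    simp only [Finset.mem_insert, Finset.mem_singleton, Finset.mem_range] at hx ⊢
    omega
  · intro x hx hx2
    simp only [Finset.mem_insert, Finset.mem_singleton, Finset.mem_range] at hx hx2
    rcases Nat.lt_or_ge e x with h | h
    · rw [Polynomial.coeff_eq_zero_of_natDegree_lt (by omega), zero_mul]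
    · rw [Polynomial.coeff_eq_zero_of_natDegree_lt (p := Q) (by omega), mul_zero]

theorem myCoeff_mul_two (P Q : ℝ[X]) {e : ℕ} (he : 2 ≤ e)
    (hP : P.natDegree ≤ e) (hQ : Q.natDegree ≤ e) :
    (P * Q).coeff (2*e - 2) = P.coeff e * Q.coeff (e-2) + P.coeff (e-1) * Q.coeff (e-1)
      + P.coeff (e-2) * Q.coeff e := by
  rw [Polynomial.coeff_mul, Finset.Nat.sum_antidiagonal_eq_sum_range_succ_mk]
  rw [← Finset.sum_subset (s₁ := ({e-2, e-1, e} : Finset ℕ))]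
  · rw [Finset.sum_insert (by simp; omega), Finset.sum_insert (by simp; omega),
      Finset.sum_singleton]
    have h1 : 2*e - 2 - (e-2) = e := by omega
    have h2 : 2*e - 2 - (e-1) = e - 1 := by omega
    have h3 : 2*e - 2 - e = e - 2 := by omega
    rw [h1, h2, h3]; ring
  · intro x hx
    simp only [Finset.mem_insert, Finset.mem_singleton, Finset.mem_range] at hx ⊢
    omega
  · intro x hx hx2
    simp only [Finset.mem_insert, Finset.mem_singleton, Finset.mem_range] at hx hx2
    rcases Nat.lt_or_ge e x with h | h
    · rw [Polynomial.coeff_eq_zero_of_natDegree_lt (by omega), zero_mul]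
    · rw [Polynomial.coeff_eq_zero_of_natDegree_lt (p := Q) (by omega), mul_zero]

theorem mySum_shift (f : ℤ → ℝ) (L : ℕ) (hper : ∀ r : ℤ, f (r + L) = f r) :
    ∑ r ∈ Finset.range L, f ((r : ℤ) + 1) = ∑ r ∈ Finset.range L, f (r : ℤ) := by
  have h1 : ∑ r ∈ Finset.range (L+1), f (r : ℤ) =
      (∑ r ∈ Finset.range L, f ((r:ℤ) + 1)) + f 0 := by
    rw [Finset.sum_range_succ']
    push_cast
    have hc : ∀ x : ℕ, f (1 + (x:ℤ)) = f ((x:ℤ) + 1) := fun x => by rw [add_comm]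
    simp only [hc]
  have h2 : ∑ r ∈ Finset.range (L+1), f (r : ℤ) =
      (∑ r ∈ Finset.range L, f (r:ℤ)) + f L := by
    rw [Finset.sum_range_succ]
  have h3 : f (L : ℤ) = f 0 := by
    have := hper 0; rwa [zero_add] at this
  linarith [h1, h2.symm]

/-- discrete harmonic with constant defect, periodic: defect is 0 and f is constant -/
theorem myHarmonic (f : ℤ → ℝ) (L : ℕ) (hL : 1 ≤ L) (K : ℝ)
    (hper : ∀ r : ℤ, f (r + L) = f r)
    (hΔ : ∀ r : ℤ, 2 * f r - f (r + 1) - f (r - 1) = K) :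
    K = 0 ∧ ∀ i j : ℤ, f i = f j := by
  have hsum1 : ∑ r ∈ Finset.range L, f ((r:ℤ) + 1) = ∑ r ∈ Finset.range L, f (r:ℤ) :=
    mySum_shift f L hper
  have hsum2 : ∑ r ∈ Finset.range L, f ((r:ℤ) - 1) = ∑ r ∈ Finset.range L, f (r:ℤ) := by
    have := mySum_shift (fun r => f (r - 1)) L (fun r => by
      show f (r + (L:ℤ) - 1) = f (r - 1)
      have := hper (r - 1); rw [← this]; ring_nf)
    simp only [add_sub_cancel_right] at this
    rw [← this]
  have hK : (L : ℝ) * K = 0 := by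
    have : ∑ r ∈ Finset.range L, (2 * f (r:ℤ) - f ((r:ℤ)+1) - f ((r:ℤ)-1)) = (L:ℝ) * K := by
      simp only [hΔ]
      rw [Finset.sum_const, nsmul_eq_mul, Finset.card_range]
    rw [Finset.sum_sub_distrib, Finset.sum_sub_distrib, hsum1, hsum2] at this
    rw [← this, ← Finset.mul_sum]
    ring
  have hK0 : K = 0 := by
    have hL' : (L:ℝ) ≠ 0 := by
      have : (0:ℝ) < L := by exact_mod_cast hL
      positivity
    exact (mul_eq_zero.mp hK).resolve_left hL' 
  refine ⟨hK0, ?_⟩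
  -- differences are constant
  have hstep : ∀ r : ℤ, f (r + 1) - f r = f 1 - f 0 := by
    intro r
    induction r using Int.induction_on with
    | zero => rfl
    | succ n ih =>
      have h := hΔ (n + 1)
      rw [hK0] at h
      have : f ((n:ℤ)+1+1) - f ((n:ℤ)+1) = f ((n:ℤ)+1) - f ((n:ℤ)+1-1) := by linarith
      rw [this]
      simpa using ih
    | pred n ih =>
      have h := hΔ (-(n:ℤ) - 1 + 1)
      rw [hK0] at h
      have heq : f (-(n:ℤ) - 1 + 1) - f (-(n:ℤ) - 1) = f (-(n:ℤ)-1+1+1) - f (-(n:ℤ)-1+1) := by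
        have h2 : (-(n:ℤ) - 1 + 1 + 1) = (-(n:ℤ) + 1) := by ring
        have h3 : (-(n:ℤ) - 1 + 1 - 1) = (-(n:ℤ) - 1) := by ring
        rw [h2] at h ⊢
        rw [h3] at h
        linarith
      rw [heq]
      have h4 : (-(n:ℤ) - 1 + 1) = -(n:ℤ) := by ring
      rw [h4]
      exact ih
  -- f n = f 0 + n * (f 1 - f 0) for n : ℕ
  have hlin : ∀ n : ℕ, f n = f 0 + n * (f 1 - f 0) := by
    intro n
    induction n with
    | zero => simp
    | succ k ih =>
      have := hstep k
      push_cast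
      push_cast at ih
      linarith
  have hd0 : f 1 - f 0 = 0 := by
    have h1 := hlin L
    have h2 : f (L:ℤ) = f 0 := by have := hper 0; rwa [zero_add] at this
    rw [h2] at h1
    have hL' : (L:ℝ) ≠ 0 := by positivity
    have : (L:ℝ) * (f 1 - f 0) = 0 := by linarith
    rcases mul_eq_zero.mp this with h | h
    · exact absurd h hL'
    · exact h
  have hconst : ∀ r : ℤ, f r = f 0 := by
    intro r
    induction r using Int.induction_on with
    | zero => rfl
    | succ n ih => have := hstep n; rw [hd0] at this; linarith
    | pred n ih =>
      have := hstep (-(n:ℤ) - 1); rw [hd0] at this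
      have h2 : (-(n:ℤ) - 1 + 1) = -(n:ℤ) := by ring
      rw [h2] at this
      linarith
  intro i j; rw [hconst i, hconst j]

/-- Next-to-leading coefficients of a quasipolynomial solution of the Q-system.  `C` is a generalized Cartan
matrix on a finite set `I`; `(q a)` is a family of quasipolynomials (each given piecewise
by polynomial constituents of degree `e a` with constant leading coefficient `c a > 0`)
satisfying the Q-system.  Then in any representation of `q a` by constituent
polynomials of degree `e a`, all constituents share the same coefficient in degrees
`e a − 1` and `e a − 2`: the next two leading coefficients are independent of `m`. -/
theorem stmt_12 {I : Type*} [Fintype I] [DecidableEq I]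
    (C : I → I → ℤ)
    (hdiag : ∀ a, C a a = 2)
    (hoff : ∀ a b, a ≠ b → C a b ≤ 0)
    (hsymzero : ∀ a b, (C a b < 0 ↔ C b a < 0))
    (q : I → ℤ → ℝ) (e : I → ℕ) (c : I → ℝ)
    (he : ∀ a, 1 ≤ e a) (hc : ∀ a, 0 < c a)
    (hqp : ∀ a, ∃ ℓ : ℕ, 1 ≤ ℓ ∧ ∃ p : ℤ → Polynomial ℝ,
      (∀ j : ℤ, 0 ≤ j → j < (ℓ : ℤ) →
        (p j).natDegree = e a ∧ (p j).coeff (e a) = c a) ∧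
      (∀ m : ℤ, q a m = (p (m % (ℓ : ℤ))).eval (m : ℝ)))
    (hQ : ∀ a, ∀ m : ℤ,
      q a m ^ 2 - q a (m + 1) * q a (m - 1) =
        ∏ b ∈ Finset.univ.filter (fun b => C a b < 0),
          ∏ k ∈ Finset.range (-(C a b)).toNat,
            q b (Int.fdiv (C b a * m - (k : ℤ)) (C a b))) :
    ∀ a : I, ∀ ℓ : ℕ, 1 ≤ ℓ → ∀ p : ℤ → Polynomial ℝ,
      (∀ j : ℤ, 0 ≤ j → j < (ℓ : ℤ) → (p j).natDegree = e a) →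
      (∀ m : ℤ, q a m = (p (m % (ℓ : ℤ))).eval (m : ℝ)) →
      ∀ i j : ℤ, 0 ≤ i → i < (ℓ : ℤ) → 0 ≤ j → j < (ℓ : ℤ) →
        (p i).coeff (e a - 1) = (p j).coeff (e a - 1) ∧
        (p i).coeff (e a - 2) = (p j).coeff (e a - 2) := by
  intro a ℓ hℓ p hdeg hrep
  choose ℓq hℓq pq hpq1 hpq2 using hqp
  set E := e a with hEdef
  have hE1 : 1 ≤ E := he a
  have hca : (0:ℝ) < c a := hc a
  have hcane : c a ≠ 0 := ne_of_gt hca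
  have hℓZ : (ℓ:ℤ) ≠ 0 := by exact_mod_cast Nat.one_le_iff_ne_zero.mp hℓ
  have hℓZ' : (0:ℤ) < (ℓ:ℤ) := by exact_mod_cast hℓ
  have hmodb : ∀ r : ℤ, 0 ≤ r % (ℓ:ℤ) ∧ r % (ℓ:ℤ) < ℓ :=
    fun r => ⟨Int.emod_nonneg r hℓZ, Int.emod_lt_of_pos r hℓZ'⟩
  have hdeg' : ∀ r : ℤ, (p (r % (ℓ:ℤ))).natDegree = E :=
    fun r => hdeg _ (hmodb r).1 (hmodb r).2
  -- the given representation also has leading coefficient c a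
  have hpeq : ∀ i : ℤ, 0 ≤ i → i < (ℓ:ℤ) → p i = pq a (i % (ℓq a : ℤ)) := by
    intro i h0 h1
    have hqa1 : 1 ≤ ℓq a := hℓq a
    apply myEqOnProg _ _ i (ℓ * ℓq a) (Nat.one_le_iff_ne_zero.mpr (by positivity))
    intro n
    have harg1 : i + ((ℓ * ℓq a : ℕ):ℤ) * n = i + (ℓ:ℤ) * ((ℓq a : ℤ) * n) := by
      push_cast; ring
    have harg2 : i + ((ℓ * ℓq a : ℕ):ℤ) * n = i + (ℓq a:ℤ) * ((ℓ : ℤ) * n) := by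
      push_cast; ring
    have hm1 : (i + ((ℓ * ℓq a : ℕ):ℤ) * n) % (ℓ:ℤ) = i := by
      rw [harg1, Int.add_mul_emod_self_left, Int.emod_eq_of_lt h0 h1]
    have hm2 : (i + ((ℓ * ℓq a : ℕ):ℤ) * n) % (ℓq a:ℤ) = i % (ℓq a:ℤ) := by
      rw [harg2, Int.add_mul_emod_self_left]
    have e1 := hrep (i + ((ℓ * ℓq a : ℕ):ℤ) * n)
    have e2 := hpq2 a (i + ((ℓ * ℓq a : ℕ):ℤ) * n)
    rw [hm1] at e1
    rw [hm2] at e2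
    rw [← e1, e2]
  have hpc : ∀ i : ℤ, 0 ≤ i → i < (ℓ:ℤ) → (p i).coeff E = c a := by
    intro i h0 h1
    rw [hpeq i h0 h1]
    have hqa1 : (0:ℤ) < (ℓq a : ℤ) := by exact_mod_cast hℓq a
    exact (hpq1 a _ (Int.emod_nonneg i (by omega)) (Int.emod_lt_of_pos i hqa1)).2
  have hpc' : ∀ r : ℤ, (p (r % (ℓ:ℤ))).coeff E = c a :=
    fun r => hpc _ (hmodb r).1 (hmodb r).2
  -- the common period L
  set L : ℕ := ℓ * ∏ b : I, (ℓq b * max 1 (-(C a b)).toNat) with hLdef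
  have hL1 : 1 ≤ L := by
    have h1 : 0 < ∏ b : I, (ℓq b * max 1 (-(C a b)).toNat) := by
      apply Finset.prod_pos
      intro b _
      exact Nat.mul_pos (hℓq b) (lt_of_lt_of_le Nat.one_pos (le_max_left _ _))
    calc 1 = 1 * 1 := by ring
    _ ≤ ℓ * ∏ b : I, (ℓq b * max 1 (-(C a b)).toNat) := Nat.mul_le_mul hℓ h1
  have hLR : (0:ℝ) < (L:ℝ) := by exact_mod_cast hL1
  have hLRne : (L:ℝ) ≠ 0 := ne_of_gt hLR
  have hℓdL : ∃ d : ℕ, L = ℓ * d := ⟨_, rfl⟩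
  have hmodL : ∀ r t : ℤ, (r + (L:ℤ) * t) % (ℓ:ℤ) = r % (ℓ:ℤ) := by
    obtain ⟨d, hd⟩ := hℓdL
    intro r t
    have : r + (L:ℤ) * t = r + (ℓ:ℤ) * ((d:ℤ) * t) := by rw [hd]; push_cast; ring
    rw [this, Int.add_mul_emod_self_left]
  -- the stretching factors S b with C a b * S b = C b a * L
  have hSex : ∀ b : I, ∃ Sb : ℤ,
      (C a b < 0 → C a b * Sb = C b a * (L:ℤ) ∧ (ℓq b : ℤ) ∣ Sb ∧ Sb ≠ 0) := by
    intro b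
    by_cases hb : C a b < 0
    · have hba : C b a < 0 := (hsymzero a b).mp hb
      have hdvdnat : (ℓq b * (-(C a b)).toNat) ∣ L := by
        apply Dvd.dvd.mul_left
        have : ℓq b * max 1 (-(C a b)).toNat = ℓq b * (-(C a b)).toNat := by
          congr 1
          exact max_eq_right (by omega)
        rw [← this]
        exact Finset.dvd_prod_of_mem _ (Finset.mem_univ b)
      have hdvd : ((ℓq b : ℤ) * (-(C a b))) ∣ (L:ℤ) := by
        have := Int.natCast_dvd_natCast.mpr hdvdnat
        push_cast at this
        rwa [Int.toNat_of_nonneg (by omega)] at this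
      obtain ⟨M, hM⟩ := hdvd
      refine ⟨C b a * (-((ℓq b:ℤ) * M)), fun _ => ⟨?_, ?_, ?_⟩⟩
      · rw [hM]; ring
      · exact ⟨-(C b a * M), by ring⟩
      · intro h0
        rcases mul_eq_zero.mp h0 with h | h
        · omega
        · have h' : (ℓq b : ℤ) * M = 0 := by omega
          rcases mul_eq_zero.mp h' with h'' | h''
          · have : 1 ≤ ℓq b := hℓq b
            omega
          · rw [h'', mul_zero] at hM
            have hL0 : (L:ℤ) = 0 := hM
            have : L = 0 := by exact_mod_cast hL0
            omega
    · exact ⟨0, fun h => absurd h hb⟩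
  choose S hS using hSex
  -- constituents of the left-hand side
  set A : ℤ → Polynomial ℝ := fun r =>
    (p (r % (ℓ:ℤ)))^2 -
      (Polynomial.taylor (1:ℝ) (p ((r+1) % (ℓ:ℤ)))) *
      (Polynomial.taylor (-1:ℝ) (p ((r-1) % (ℓ:ℤ)))) with hAdef
  -- constituents of the right-hand side
  set γ : I → ℝ := fun b => (S b : ℝ) / (L:ℝ) with hγdef
  have hγne : ∀ b : I, C a b < 0 → γ b ≠ 0 := by
    intro b hb
    have h3 := (hS b hb).2.2
    have : (S b : ℝ) ≠ 0 := by exact_mod_cast h3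
    exact div_ne_zero this hLRne
  set F : I → ℕ → ℤ → Polynomial ℝ := fun b k r =>
    (pq b ((Int.fdiv (C b a * r - (k:ℤ)) (C a b)) % (ℓq b : ℤ))).comp
      (Polynomial.C (γ b) * Polynomial.X +
        Polynomial.C (((Int.fdiv (C b a * r - (k:ℤ)) (C a b)) : ℝ) - γ b * r)) with hFdef
  set B : ℤ → Polynomial ℝ := fun r =>
    ∏ b ∈ Finset.univ.filter (fun b => C a b < 0),
      ∏ k ∈ Finset.range (-(C a b)).toNat, F b k r with hBdef
  -- evaluation of A on the progression
  have hAeval : ∀ r t : ℤ,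
      (A r).eval (((r + (L:ℤ) * t : ℤ)):ℝ) =
        q a (r + L*t) ^ 2 - q a (r + L*t + 1) * q a (r + L*t - 1) := by
    intro r t
    simp only [hAdef]
    rw [Polynomial.eval_sub, Polynomial.eval_pow, Polynomial.eval_mul,
      Polynomial.taylor_eval, Polynomial.taylor_eval]
    rw [hrep (r + L*t), hrep (r + L*t + 1), hrep (r + L*t - 1)]
    rw [hmodL r t]
    have h1 : (r + (L:ℤ)*t + 1) % (ℓ:ℤ) = (r+1) % (ℓ:ℤ) := by
      have : r + (L:ℤ)*t + 1 = (r+1) + (L:ℤ)*t := by ring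
      rw [this, hmodL]
    have h2 : (r + (L:ℤ)*t - 1) % (ℓ:ℤ) = (r-1) % (ℓ:ℤ) := by
      have : r + (L:ℤ)*t - 1 = (r-1) + (L:ℤ)*t := by ring
      rw [this, hmodL]
    rw [h1, h2]
    push_cast
    ring_nf
  -- evaluation of B on the progression
  have hBeval : ∀ r t : ℤ,
      (B r).eval (((r + (L:ℤ) * t : ℤ)):ℝ) =
        ∏ b ∈ Finset.univ.filter (fun b => C a b < 0),
          ∏ k ∈ Finset.range (-(C a b)).toNat,
            q b (Int.fdiv (C b a * (r + L*t) - (k:ℤ)) (C a b)) := by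
    intro r t
    simp only [hBdef, Polynomial.eval_prod]
    apply Finset.prod_congr rfl
    intro b hb
    apply Finset.prod_congr rfl
    intro k hk
    have hb' : C a b < 0 := by
      simpa using (Finset.mem_filter.mp hb).2
    obtain ⟨hS1, hS2, hS3⟩ := hS b hb'
    have harg : Int.fdiv (C b a * (r + L*t) - (k:ℤ)) (C a b) =
        Int.fdiv (C b a * r - (k:ℤ)) (C a b) + S b * t := by
      have hCS : C a b * (S b * t) = C b a * (L:ℤ) * t := by
        rw [← mul_assoc, hS1]
      have : C b a * (r + (L:ℤ)*t) - (k:ℤ) =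
          (C b a * r - (k:ℤ)) + C a b * (S b * t) := by
        rw [hCS]; ring
      rw [this, myFdiv_add_mul _ _ (ne_of_lt hb')]
    rw [harg]
    set t0 := Int.fdiv (C b a * r - (k:ℤ)) (C a b) with ht0
    have hres : (t0 + S b * t) % (ℓq b : ℤ) = t0 % (ℓq b : ℤ) := by
      obtain ⟨u, hu⟩ := hS2
      rw [hu, mul_assoc, Int.add_mul_emod_self_left]
    rw [hpq2 b (t0 + S b * t), hres]
    simp only [hFdef]
    rw [Polynomial.eval_comp]
    congr 1
    simp only [Polynomial.eval_add, Polynomial.eval_mul, Polynomial.eval_C, Polynomial.eval_X]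
    have hγL : γ b * (L:ℝ) = (S b : ℝ) := by
      simp only [hγdef]
      field_simp
    push_cast
    linear_combination (t:ℝ) * hγL
  -- A and B agree
  have hAB : ∀ r : ℤ, A r = B r := by
    intro r
    apply myEqOnProg _ _ r L hL1
    intro n
    rw [hAeval r n, hBeval r n, hQ a (r + L*n)]
  -- coefficients of A
  set bf : ℤ → ℝ := fun r => (p (r % (ℓ:ℤ))).coeff (E-1) with hbfdef
  set df : ℤ → ℝ := fun r => (p (r % (ℓ:ℤ))).coeff (E-2) with hdfdef
  have hbfper : ∀ r : ℤ, bf (r + L) = bf r := by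
    intro r
    have h := hmodL r 1
    rw [mul_one] at h
    simp only [hbfdef, h]
  have hdfper : ∀ r : ℤ, df (r + L) = df r := by
    intro r
    have h := hmodL r 1
    rw [mul_one] at h
    simp only [hdfdef, h]
  -- taylor facts
  have hT1deg : ∀ r : ℤ, (Polynomial.taylor (1:ℝ) (p ((r+1) % (ℓ:ℤ)))).natDegree = E := by
    intro r
    rw [Polynomial.natDegree_taylor]
    exact hdeg' (r+1)
  have hT2deg : ∀ r : ℤ, (Polynomial.taylor (-1:ℝ) (p ((r-1) % (ℓ:ℤ)))).natDegree = E := by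
    intro r
    rw [Polynomial.natDegree_taylor]
    exact hdeg' (r-1)
  have hT1top : ∀ r : ℤ, (Polynomial.taylor (1:ℝ) (p ((r+1) % (ℓ:ℤ)))).coeff E = c a := by
    intro r
    rw [myTaylor_coeff_top _ _ (le_of_eq (hdeg' (r+1)))]
    exact hpc' (r+1)
  have hT2top : ∀ r : ℤ, (Polynomial.taylor (-1:ℝ) (p ((r-1) % (ℓ:ℤ)))).coeff E = c a := by
    intro r
    rw [myTaylor_coeff_top _ _ (le_of_eq (hdeg' (r-1)))]
    exact hpc' (r-1)
  have hT1one : ∀ r : ℤ, (Polynomial.taylor (1:ℝ) (p ((r+1) % (ℓ:ℤ)))).coeff (E-1) =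
      bf (r+1) + E * c a := by
    intro r
    rw [myTaylor_coeff_one _ _ (le_of_eq (hdeg' (r+1))) hE1, hpc' (r+1)]
    simp only [hbfdef]
    ring
  have hT2one : ∀ r : ℤ, (Polynomial.taylor (-1:ℝ) (p ((r-1) % (ℓ:ℤ)))).coeff (E-1) =
      bf (r-1) - E * c a := by
    intro r
    rw [myTaylor_coeff_one _ _ (le_of_eq (hdeg' (r-1))) hE1, hpc' (r-1)]
    simp only [hbfdef]
    ring
  have hAcoeff1 : ∀ r : ℤ, (A r).coeff (2*E-1) =
      c a * (2 * bf r - bf (r+1) - bf (r-1)) := by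
    intro r
    simp only [hAdef, Polynomial.coeff_sub, sq]
    rw [myCoeff_mul_one _ _ hE1 (le_of_eq (hdeg' r)) (le_of_eq (hdeg' r))]
    rw [myCoeff_mul_one _ _ hE1 (le_of_eq (hT1deg r)) (le_of_eq (hT2deg r))]
    rw [hT1top r, hT2top r, hT1one r, hT2one r, hpc' r]
    simp only [hbfdef]
    ring
  have hAdegle : ∀ r : ℤ, (A r).natDegree ≤ 2*E - 1 := by
    intro r
    rw [Polynomial.natDegree_le_iff_coeff_eq_zero]
    intro N hN
    have hN2 : 2*E ≤ N := by omega
    simp only [hAdef, Polynomial.coeff_sub, sq]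
    rcases eq_or_lt_of_le hN2 with hN3 | hN3
    · have hP2 : ((p (r % (ℓ:ℤ))) * (p (r % (ℓ:ℤ)))).coeff N = c a * c a := by
        have hsum : N = (p (r % (ℓ:ℤ))).natDegree + (p (r % (ℓ:ℤ))).natDegree := by
          rw [hdeg' r]; omega
        rw [hsum, Polynomial.coeff_mul_degree_add_degree]
        rw [Polynomial.leadingCoeff, hdeg' r, hpc' r]
      have hT2' : ((Polynomial.taylor (1:ℝ) (p ((r+1) % (ℓ:ℤ)))) *
          (Polynomial.taylor (-1:ℝ) (p ((r-1) % (ℓ:ℤ))))).coeff N = c a * c a := by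
        have hsum : N = (Polynomial.taylor (1:ℝ) (p ((r+1) % (ℓ:ℤ)))).natDegree +
            (Polynomial.taylor (-1:ℝ) (p ((r-1) % (ℓ:ℤ)))).natDegree := by
          rw [hT1deg r, hT2deg r]; omega
        rw [hsum, Polynomial.coeff_mul_degree_add_degree]
        rw [Polynomial.leadingCoeff, Polynomial.leadingCoeff, hT1deg r, hT2deg r,
          hT1top r, hT2top r]
      rw [hP2, hT2']
      ring
    · have h1 : ((p (r % (ℓ:ℤ))) * (p (r % (ℓ:ℤ)))).coeff N = 0 := by
        apply Polynomial.coeff_eq_zero_of_natDegree_lt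
        calc ((p (r % (ℓ:ℤ))) * (p (r % (ℓ:ℤ)))).natDegree ≤ E + E := by
              apply le_trans (Polynomial.natDegree_mul_le)
              rw [hdeg' r]
        _ < N := by omega
      have h2 : ((Polynomial.taylor (1:ℝ) (p ((r+1) % (ℓ:ℤ)))) *
          (Polynomial.taylor (-1:ℝ) (p ((r-1) % (ℓ:ℤ))))).coeff N = 0 := by
        apply Polynomial.coeff_eq_zero_of_natDegree_lt
        calc _ ≤ _ := Polynomial.natDegree_mul_le
        _ < N := by rw [hT1deg r, hT2deg r]; omega
      rw [h1, h2]
      ring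
  -- degree and leading coefficient of B
  have hFfacts : ∀ b : I, C a b < 0 → ∀ k : ℕ, ∀ r : ℤ,
      (F b k r).natDegree = e b ∧ (F b k r).leadingCoeff = c b * γ b ^ (e b) ∧
        F b k r ≠ 0 := by
    intro b hb k r
    have hqb : (0:ℤ) < (ℓq b : ℤ) := by exact_mod_cast hℓq b
    have hmb0 : 0 ≤ (Int.fdiv (C b a * r - (k:ℤ)) (C a b)) % (ℓq b:ℤ) :=
      Int.emod_nonneg _ (by omega)
    have hmb1 : (Int.fdiv (C b a * r - (k:ℤ)) (C a b)) % (ℓq b:ℤ) < (ℓq b:ℤ) :=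
      Int.emod_lt_of_pos _ hqb
    obtain ⟨hd1, hd2⟩ := hpq1 b _ hmb0 hmb1
    have hγb := hγne b hb
    have hlin : (Polynomial.C (γ b) * Polynomial.X +
        Polynomial.C (((Int.fdiv (C b a * r - (k:ℤ)) (C a b)) : ℝ) - γ b * r)).natDegree = 1 :=
      Polynomial.natDegree_linear hγb
    have hlinl : (Polynomial.C (γ b) * Polynomial.X +
        Polynomial.C (((Int.fdiv (C b a * r - (k:ℤ)) (C a b)) : ℝ) - γ b * r)).leadingCoeff =
        γ b := Polynomial.leadingCoeff_linear hγb
    constructor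
    · simp only [hFdef]
      rw [Polynomial.natDegree_comp, hlin, hd1, mul_one]
    · have hlead : (F b k r).leadingCoeff = c b * γ b ^ (e b) := by
        simp only [hFdef]
        rw [Polynomial.leadingCoeff_comp (by rw [hlin]; omega), hlinl]
        rw [Polynomial.leadingCoeff, hd1, hd2]
      refine ⟨hlead, ?_⟩
      rw [← Polynomial.leadingCoeff_ne_zero, hlead]
      exact mul_ne_zero (ne_of_gt (hc b)) (pow_ne_zero _ (hγne b hb))
  set D : ℕ := ∑ b ∈ Finset.univ.filter (fun b => C a b < 0), (-(C a b)).toNat * e b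
    with hDdef
  set R : ℝ := ∏ b ∈ Finset.univ.filter (fun b => C a b < 0),
      (c b * γ b ^ (e b)) ^ (-(C a b)).toNat with hRdef
  have hmemfilt : ∀ b ∈ Finset.univ.filter (fun b => C a b < 0), C a b < 0 := by
    intro b hb
    simpa using (Finset.mem_filter.mp hb).2
  have hBne : ∀ r : ℤ, B r ≠ 0 := by
    intro r
    simp only [hBdef]
    rw [Finset.prod_ne_zero_iff]
    intro b hb
    rw [Finset.prod_ne_zero_iff]
    intro k hk
    exact ((hFfacts b (hmemfilt b hb) k r).2).2
  have hBdeg : ∀ r : ℤ, (B r).natDegree = D := by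
    intro r
    simp only [hBdef, hDdef]
    rw [Polynomial.natDegree_prod _ _ (fun b hb =>
      Finset.prod_ne_zero_iff.mpr (fun k _ => ((hFfacts b (hmemfilt b hb) k r).2).2))]
    apply Finset.sum_congr rfl
    intro b hb
    rw [Polynomial.natDegree_prod _ _ (fun k _ => ((hFfacts b (hmemfilt b hb) k r).2).2)]
    rw [Finset.sum_congr rfl (fun k _ => (hFfacts b (hmemfilt b hb) k r).1)]
    rw [Finset.sum_const, Finset.card_range, smul_eq_mul]
  have hBlead : ∀ r : ℤ, (B r).leadingCoeff = R := by
    intro r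
    simp only [hBdef, hRdef]
    rw [Polynomial.leadingCoeff_prod]
    apply Finset.prod_congr rfl
    intro b hb
    rw [Polynomial.leadingCoeff_prod]
    rw [Finset.prod_congr rfl (fun k _ => ((hFfacts b (hmemfilt b hb) k r).2).1)]
    rw [Finset.prod_const, Finset.card_range]
  have hRne : R ≠ 0 := by
    rw [← hBlead 0, Polynomial.leadingCoeff_ne_zero]
    exact hBne 0
  have hBcoeffD : ∀ r : ℤ, (B r).coeff D = R := by
    intro r
    rw [← hBdeg r, Polynomial.coeff_natDegree, hBlead r]
  have hBcoeff0 : ∀ r : ℤ, ∀ N : ℕ, D < N → (B r).coeff N = 0 := by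
    intro r N hN
    apply Polynomial.coeff_eq_zero_of_natDegree_lt
    rw [hBdeg r]; exact hN
  -- D is at most 2E - 1
  have hDle : D ≤ 2*E - 1 := by
    rw [← hBdeg 0, ← hAB 0]
    exact hAdegle 0
  -- common value of B-coefficients
  have hκ1 : ∀ r : ℤ, (B r).coeff (2*E-1) = (B 0).coeff (2*E-1) := by
    intro r
    rcases eq_or_lt_of_le hDle with hD | hD
    · rw [← hD, hBcoeffD, hBcoeffD]
    · rw [hBcoeff0 r _ hD, hBcoeff0 0 _ hD]
  have hstep1 : ∀ r : ℤ, 2 * bf r - bf (r+1) - bf (r-1) = (B 0).coeff (2*E-1) / c a := by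
    intro r
    have h := hAcoeff1 r
    rw [hAB r, hκ1 r] at h
    rw [eq_div_iff hcane]
    linarith [h]
  obtain ⟨hK10, hbconst⟩ := myHarmonic bf L hL1 _ hbfper hstep1
  have hB0c : (B 0).coeff (2*E-1) = 0 := by
    have := hK10
    field_simp at this
    simpa using this
  have hDle2 : D ≤ 2*E - 2 := by
    rcases eq_or_lt_of_le hDle with hD | hD
    · exfalso
      apply hRne
      rw [← hBcoeffD 0, hD, hB0c]
    · omega
  -- conclusions
  intro i j h0i h1i h0j h1j
  have hii : i % (ℓ:ℤ) = i := Int.emod_eq_of_lt h0i h1i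
  have hjj : j % (ℓ:ℤ) = j := Int.emod_eq_of_lt h0j h1j
  have hfirst : (p i).coeff (E-1) = (p j).coeff (E-1) := by
    have h1 : bf i = (p i).coeff (E-1) := by simp only [hbfdef, hii]
    have h2 : bf j = (p j).coeff (E-1) := by simp only [hbfdef, hjj]
    rw [← h1, ← h2]
    exact hbconst i j
  refine ⟨hfirst, ?_⟩
  by_cases hE2 : 2 ≤ E
  · -- second coefficient, main case
    have hch : (2:ℝ) * (E.choose 2 : ℝ) = (E:ℝ)^2 - (E:ℝ) := by
      have hnat : 2 * E.choose 2 = E * (E-1) := by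
        rw [Nat.choose_two_right]
        rw [Nat.two_mul_div_two_of_even]
        have : E * (E-1) = (E-1) * ((E-1)+1) := by
          rw [Nat.sub_add_cancel hE1]; ring
        rw [this]
        exact Nat.even_mul_succ_self _
      have : ((2 * E.choose 2 : ℕ):ℝ) = ((E * (E-1) : ℕ):ℝ) := by exact_mod_cast hnat
      push_cast [Nat.cast_sub hE1] at this
      linarith [this]
    have hT1two : ∀ r : ℤ, (Polynomial.taylor (1:ℝ) (p ((r+1) % (ℓ:ℤ)))).coeff (E-2) =
        df (r+1) + ((E:ℝ)-1) * bf (r+1) + (E.choose 2 : ℝ) * c a := by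
      intro r
      rw [myTaylor_coeff_two _ _ (le_of_eq (hdeg' (r+1))) hE2, hpc' (r+1)]
      simp only [hdfdef, hbfdef]
      push_cast [Nat.cast_sub hE1]
      ring
    have hT2two : ∀ r : ℤ, (Polynomial.taylor (-1:ℝ) (p ((r-1) % (ℓ:ℤ)))).coeff (E-2) =
        df (r-1) - ((E:ℝ)-1) * bf (r-1) + (E.choose 2 : ℝ) * c a := by
      intro r
      rw [myTaylor_coeff_two _ _ (le_of_eq (hdeg' (r-1))) hE2, hpc' (r-1)]
      simp only [hdfdef, hbfdef]
      push_cast [Nat.cast_sub hE1]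
      ring
    have hAcoeff2 : ∀ r : ℤ, (A r).coeff (2*E-2) =
        c a * (2 * df r - df (r+1) - df (r-1)) + (c a)^2 * E := by
      intro r
      simp only [hAdef, Polynomial.coeff_sub, sq]
      rw [myCoeff_mul_two _ _ hE2 (le_of_eq (hdeg' r)) (le_of_eq (hdeg' r))]
      rw [myCoeff_mul_two _ _ hE2 (le_of_eq (hT1deg r)) (le_of_eq (hT2deg r))]
      rw [hT1top r, hT2top r, hT1one r, hT2one r, hT1two r, hT2two r, hpc' r]
      have hb1 : bf (r+1) = bf r := hbconst _ _
      have hb2 : bf (r-1) = bf r := hbconst _ _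
      rw [hb1, hb2]
      have hdfr : (p (r % (ℓ:ℤ))).coeff (E-2) = df r := by simp only [hdfdef]
      have hbfr : (p (r % (ℓ:ℤ))).coeff (E-1) = bf r := by simp only [hbfdef]
      rw [hdfr, hbfr]
      linear_combination (-(c a)^2) * hch
    have hκ2 : ∀ r : ℤ, (B r).coeff (2*E-2) = (B 0).coeff (2*E-2) := by
      intro r
      rcases eq_or_lt_of_le hDle2 with hD | hD
      · rw [← hD, hBcoeffD, hBcoeffD]
      · rw [hBcoeff0 r _ hD, hBcoeff0 0 _ hD]
    have hstep2 : ∀ r : ℤ, 2 * df r - df (r+1) - df (r-1) =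
        ((B 0).coeff (2*E-2) - (c a)^2 * E) / c a := by
      intro r
      have h := hAcoeff2 r
      rw [hAB r, hκ2 r] at h
      rw [eq_div_iff hcane]
      linarith [h]
    obtain ⟨-, hdconst⟩ := myHarmonic df L hL1 _ hdfper hstep2
    have h1 : df i = (p i).coeff (E-2) := by simp only [hdfdef, hii]
    have h2 : df j = (p j).coeff (E-2) := by simp only [hdfdef, hjj]
    rw [← h1, ← h2]
    exact hdconst i j
  · -- degenerate case e a = 1
    have h12 : E - 2 = E - 1 := by omega
    rw [h12]
    exact hfirst
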